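/- Let C ⊆ Mat(k,m,F_q) (k ≤ m) be an MRD code with |C| ≥ 2 and minimum distance d, i.e., |C| = q^{m(k−d+1)}. Then for every subspace U ⊆ F_q^k of dimension u ≥ d−1, the number of matrices in C with column space contained in U is exactly q^{m(u−d+1)}. -/

import Mathlib

open Matrix Module

section Aux

variable {F : Type*} [Field F] [Fintype F] {k m : ℕ}

private lemma exists_sub_finrank {V : Type*} [AddCommGroup V] [Module F V]
    [FiniteDimensional F V] (T : Submodule F V) (n : ℕ) (hn : n ≤ finrank F T) :
    ∃ T' : Submodule F V, T' ≤ T ∧ finrank F T' = n := by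
  classical
  let b := Module.finBasis F T
  have hli : LinearIndependent F (fun i : Fin n => ((b (Fin.castLE hn i) : V))) := by
    have h1 : LinearIndependent F (fun i : Fin (finrank F T) => ((b i : V))) :=
      b.linearIndependent.map' T.subtype (Submodule.ker_subtype T)
    exact h1.comp (Fin.castLE hn) (Fin.castLE_injective hn)
  refine ⟨Submodule.span F (Set.range fun i : Fin n => ((b (Fin.castLE hn i) : V))), ?_, ?_⟩
  · rw [Submodule.span_le]
    rintro x ⟨i, rfl⟩
    exact (b (Fin.castLE hn i)).2
  · rw [finrank_span_eq_card hli, Fintype.card_fin]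

private lemma rank_le_of_range_le {A : Matrix (Fin k) (Fin m) F}
    {T : Submodule F (Fin k → F)} (h : LinearMap.range A.mulVecLin ≤ T) :
    A.rank ≤ finrank F T :=
  Submodule.finrank_mono h

private lemma one_le_rank_of_ne {A : Matrix (Fin k) (Fin m) F} (hA : A ≠ 0) :
    1 ≤ A.rank := by
  classical
  by_contra h
  push_neg at h
  have h0 : A.rank = 0 := by omega
  apply hA
  have hb : LinearMap.range A.mulVecLin = ⊥ := Submodule.finrank_eq_zero.mp h0
  have hz : A.mulVecLin = 0 := LinearMap.range_eq_bot.mp hb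
  apply Matrix.ext
  intro i j
  have h1 : A *ᵥ Pi.single j 1 = 0 := by
    rw [← Matrix.mulVecLin_apply, hz]; rfl
  have h2 : Aᵀ j = 0 := by rwa [Matrix.mulVec_single_one] at h1
  have := congrFun h2 i
  simpa [Matrix.transpose_apply] using this

set_option synthInstance.maxHeartbeats 1000000 in
private lemma core_bound (d : ℕ) (hd1 : 1 ≤ d)
    (T : Submodule F (Fin k → F)) (S : Finset (Matrix (Fin k) (Fin m) F))
    (hS1 : ∀ M ∈ S, ∀ N ∈ S, LinearMap.range (M - N).mulVecLin ≤ T)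
    (hS2 : ∀ M ∈ S, ∀ N ∈ S, M ≠ N → d ≤ (M - N).rank) :
    S.card ≤ Fintype.card F ^ (m * (finrank F T + 1 - d)) := by
  classical
  by_cases hcase : finrank F T < d
  · have hS : S.card ≤ 1 := by
      refine Finset.card_le_one.mpr (fun M hM N hN => ?_)
      by_contra hne
      have h1 := hS2 M hM N hN hne
      have h2 : (M - N).rank ≤ finrank F T := rank_le_of_range_le (hS1 M hM N hN)
      omega
    exact hS.trans (Nat.one_le_pow _ _ Fintype.card_pos)
  · push_neg at hcase
    have hdt : d - 1 ≤ finrank F T := le_trans (Nat.sub_le d 1) hcase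
    obtain ⟨T', hT'le, hT'rank⟩ := exists_sub_finrank T (d - 1) hdt
    rcases S.eq_empty_or_nonempty with h | ⟨M₀, hM₀⟩
    · simp [h]
    set T'' := T.map T'.mkQ with hT''
    have hmem : ∀ M ∈ S, ∀ x, (T'.mkQ ∘ₗ (M - M₀).mulVecLin) x ∈ T'' := by
      intro M hM x
      exact Submodule.mem_map_of_mem (hS1 M hM M₀ hM₀ (LinearMap.mem_range_self _ x))
    have finT'' : Finite ((Fin m → F) →ₗ[F] ↥T'') :=
      Finite.of_injective _ DFunLike.coe_injective
    have : Fintype ((Fin m → F) →ₗ[F] ↥T'') := Fintype.ofFinite _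
    set g : {M // M ∈ S} → ((Fin m → F) →ₗ[F] ↥T'') :=
      fun M => LinearMap.codRestrict T'' (T'.mkQ ∘ₗ ((M : Matrix (Fin k) (Fin m) F) - M₀).mulVecLin)
        (hmem M M.2) with hg
    have hginj : Function.Injective g := by
      intro M N hMN
      ext1
      by_contra hne
      have hrank := hS2 M M.2 N N.2 hne
      have hle : LinearMap.range ((M : Matrix (Fin k) (Fin m) F) - (N : Matrix (Fin k) (Fin m) F)).mulVecLin ≤ T' := by
        rintro _ ⟨x, rfl⟩
        have h1 : ((g M x : ↥T'') : (Fin k → F) ⧸ T') = ((g N x : ↥T'') : (Fin k → F) ⧸ T') := by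
          rw [hMN]
        simp only [hg, LinearMap.codRestrict_apply, LinearMap.comp_apply,
          Matrix.mulVecLin_apply, Submodule.mkQ_apply] at h1
        rw [Submodule.Quotient.eq] at h1
        have h2 : ((M : Matrix (Fin k) (Fin m) F) - (N : Matrix (Fin k) (Fin m) F)) *ᵥ x
            = ((M : Matrix (Fin k) (Fin m) F) - M₀) *ᵥ x
              - ((N : Matrix (Fin k) (Fin m) F) - M₀) *ᵥ x := by
          rw [← Matrix.sub_mulVec, sub_sub_sub_cancel_right]
        rw [Matrix.mulVecLin_apply, h2]
        exact h1
      have h3 : ((M : Matrix (Fin k) (Fin m) F) - (N : Matrix (Fin k) (Fin m) F)).rank ≤ d - 1 := by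
        have := rank_le_of_range_le hle
        omega
      omega
    have hT''rank : finrank F ↥T'' = finrank F T - (d - 1) := by
      have h1 := LinearMap.finrank_range_add_finrank_ker (T'.mkQ ∘ₗ T.subtype)
      have hr : LinearMap.range (T'.mkQ ∘ₗ T.subtype) = T'' := by
        rw [LinearMap.range_comp, Submodule.range_subtype]
      have hk : LinearMap.ker (T'.mkQ ∘ₗ T.subtype) = T'.comap T.subtype := by
        rw [LinearMap.ker_comp, Submodule.ker_mkQ]
      have he : finrank F ↥(T'.comap T.subtype) = d - 1 := by
        rw [← hT'rank]
        exact (Submodule.comapSubtypeEquivOfLe hT'le).finrank_eq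
      rw [hr, hk, he] at h1
      omega
    calc S.card = Fintype.card {M // M ∈ S} := (Fintype.card_coe S).symm
      _ ≤ Fintype.card ((Fin m → F) →ₗ[F] ↥T'') := Fintype.card_le_of_injective g hginj
      _ = Fintype.card F ^ finrank F ((Fin m → F) →ₗ[F] ↥T'') := Module.card_eq_pow_finrank (K := F) (V := (Fin m → F) →ₗ[F] ↥T'')
      _ = Fintype.card F ^ (m * (finrank F T + 1 - d)) := by
          rw [Module.finrank_linearMap, Module.finrank_fin_fun, hT''rank]
          congr 2
          omega

end Aux

/-- For an MRD code `C ⊆ Mat(k,m,F_q)` with minimum distance `d` and any subspace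
`U ⊆ F_q^k` with `dim U = u ≥ d - 1`, one has `|C(U)| = q^{m(u-d+1)}`. -/
theorem card_MRD_restricted_to_subspace
    (F : Type*) [Field F] [Fintype F] (k m : ℕ) (hkm : k ≤ m)
    (q : ℕ) (hq : q = Fintype.card F)
    (C : Set (Matrix (Fin k) (Fin m) F)) (hC : 2 ≤ Nat.card C)
    (d : ℕ) (hd : d = sInf {r : ℕ | ∃ M ∈ C, ∃ N ∈ C, M ≠ N ∧ (M - N).rank = r})
    (hMRD : Nat.card C = q ^ (m * (k + 1 - d)))
    (U : Submodule F (Fin k → F)) (u : ℕ) (hu : u = finrank F U) (hud : d - 1 ≤ u) :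
    Nat.card {M : Matrix (Fin k) (Fin m) F //
        M ∈ C ∧ Submodule.span F (Set.range Mᵀ) ≤ U} = q ^ (m * (u + 1 - d)) := by
  classical
  -- basic facts about `d`
  have hnt : Nontrivial ↥C := Finite.one_lt_card_iff_nontrivial.mp (by omega)
  obtain ⟨⟨M₁, hM₁⟩, ⟨M₂, hM₂⟩, hne12⟩ := exists_pair_ne ↥C
  have hne' : M₁ ≠ M₂ := fun h => hne12 (Subtype.ext h)
  have hdmem : d ∈ {r : ℕ | ∃ M ∈ C, ∃ N ∈ C, M ≠ N ∧ (M - N).rank = r} := by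
    rw [hd]
    exact Nat.sInf_mem ⟨_, M₁, hM₁, M₂, hM₂, hne', rfl⟩
  obtain ⟨Ma, hMa, Mb, hMb, hab, hrank_d⟩ := hdmem
  have hd1 : 1 ≤ d := hrank_d ▸ one_le_rank_of_ne (sub_ne_zero.mpr hab)
  have hdle : ∀ M ∈ C, ∀ N ∈ C, M ≠ N → d ≤ (M - N).rank := by
    intro M hM N hN h
    rw [hd]
    exact Nat.sInf_le ⟨M, hM, N, hN, h, rfl⟩
  have huk : u ≤ k := by
    rw [hu]
    have := U.finrank_le
    rwa [Module.finrank_fin_fun] at this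
  have hdu : d ≤ u + 1 := by omega
  -- the projection map
  set φ : Matrix (Fin k) (Fin m) F → ((Fin m → F) →ₗ[F] ((Fin k → F) ⧸ U)) :=
    fun M => U.mkQ ∘ₗ M.mulVecLin with hφdef
  have key0 : ∀ M N : Matrix (Fin k) (Fin m) F, φ M = φ N →
      LinearMap.range (M - N).mulVecLin ≤ U := by
    intro M N h
    rintro _ ⟨x, rfl⟩
    have h1 := LinearMap.congr_fun h x
    simp only [hφdef, LinearMap.comp_apply, Matrix.mulVecLin_apply,
      Submodule.mkQ_apply] at h1
    rw [Submodule.Quotient.eq] at h1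
    rw [Matrix.mulVecLin_apply, Matrix.sub_mulVec]
    exact h1
  have hφ0 : ∀ M : Matrix (Fin k) (Fin m) F,
      (φ M = 0 ↔ Submodule.span F (Set.range Mᵀ) ≤ U) := by
    intro M
    constructor
    · intro h
      rw [show Submodule.span F (Set.range Mᵀ) = Submodule.span F (Set.range M.col) from rfl,
        ← Matrix.range_mulVecLin, ← Submodule.ker_mkQ U]
      exact LinearMap.range_le_ker_iff.mpr h
    · intro h
      apply LinearMap.range_le_ker_iff.mp
      rw [Submodule.ker_mkQ]
      rwa [Matrix.range_mulVecLin]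
  -- finiteness
  have finL : Finite ((Fin m → F) →ₗ[F] ((Fin k → F) ⧸ U)) :=
    Finite.of_injective _ DFunLike.coe_injective
  have : Fintype ((Fin m → F) →ₗ[F] ((Fin k → F) ⧸ U)) := Fintype.ofFinite _
  have : Fintype ↥C := Fintype.ofFinite _
  set Cf : Finset (Matrix (Fin k) (Fin m) F) := C.toFinset with hCf
  have hCfcard : Cf.card = q ^ (m * (k + 1 - d)) := by
    rw [hCf, Set.toFinset_card, ← Nat.card_eq_fintype_card]
    exact hMRD
  have hquot : finrank F ((Fin k → F) ⧸ U) = k - u := by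
    have h2 := Submodule.finrank_quotient_add_finrank U
    have h3 : finrank F (Fin k → F) = k := Module.finrank_fin_fun F
    omega
  have hLcard : Fintype.card ((Fin m → F) →ₗ[F] ((Fin k → F) ⧸ U)) = q ^ (m * (k - u)) := by
    rw [Module.card_eq_pow_finrank (K := F), Module.finrank_linearMap, Module.finrank_fin_fun,
      hquot, hq]
  -- fiberwise decomposition
  have hfib := Finset.card_eq_sum_card_fiberwise
    (f := φ) (s := Cf) (t := (Finset.univ : Finset ((Fin m → F) →ₗ[F] ((Fin k → F) ⧸ U))))
    (fun x _ => Finset.mem_univ _)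
  have hbound : ∀ b : (Fin m → F) →ₗ[F] ((Fin k → F) ⧸ U),
      (Cf.filter (fun M => φ M = b)).card ≤ q ^ (m * (u + 1 - d)) := by
    intro b
    have h1 : ∀ M ∈ Cf.filter (fun M => φ M = b), ∀ N ∈ Cf.filter (fun M => φ M = b),
        LinearMap.range (M - N).mulVecLin ≤ U := by
      intro M hM N hN
      rw [Finset.mem_filter] at hM hN
      exact key0 M N (hM.2.trans hN.2.symm)
    have h2 : ∀ M ∈ Cf.filter (fun M => φ M = b), ∀ N ∈ Cf.filter (fun M => φ M = b),
        M ≠ N → d ≤ (M - N).rank := by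
      intro M hM N hN h
      rw [Finset.mem_filter, hCf, Set.mem_toFinset] at hM hN
      exact hdle M hM.1 N hN.1 h
    have := core_bound d hd1 U (Cf.filter (fun M => φ M = b)) h1 h2
    rw [hq, hu]
    exact this
  have hsum_eq : ∀ b ∈ (Finset.univ : Finset ((Fin m → F) →ₗ[F] ((Fin k → F) ⧸ U))),
      (Cf.filter (fun M => φ M = b)).card = q ^ (m * (u + 1 - d)) := by
    apply (Finset.sum_eq_sum_iff_of_le (fun i _ => hbound i)).mp
    rw [← hfib, Finset.sum_const, smul_eq_mul, Finset.card_univ, hLcard, hCfcard,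
      ← pow_add, ← Nat.mul_add]
    congr 2
    omega
  have hfinal := hsum_eq 0 (Finset.mem_univ 0)
  have hEquiv : {M : Matrix (Fin k) (Fin m) F //
      M ∈ C ∧ Submodule.span F (Set.range Mᵀ) ≤ U} ≃
      {M // M ∈ Cf.filter (fun M => φ M = 0)} := by
    apply Equiv.subtypeEquivRight
    intro M
    rw [Finset.mem_filter, hCf, Set.mem_toFinset, hφ0 M]
  rw [Nat.card_congr hEquiv, Nat.card_eq_fintype_card, Fintype.card_coe, hfinal]
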